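/- arXiv:1704.04465 — 2 statements merged into one kernel-verified Lean document; each statement's English description precedes it below -/
import Mathlib

section
/- Best response dynamics converges in finite time: every sequence B_0, B_1, …, B_T of feasible profiles in which, for each t < T, there is a cache m_t such that B_{t+1} differs from B_t only in the placement of cache m_t and f^(m_t)(B_{t+1}) < f^(m_t)(B_t), has length T + 1 at most C(J,K)^N (the number of feasible profiles); in particular there is no infinite such strictly improving sequence. -/
open Finset

/-- `qm p B m j` = Σ_{s ∋ m} p_s Π_{ℓ ∈ s \ {m}} (1 - b^(ℓ)_j). -/
noncomputable def qm {N J : ℕ} (p : Finset (Fin N) → ℝ) (B : Fin N → Fin J → ℝ)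
    (m : Fin N) (j : Fin J) : ℝ :=
  ∑ s ∈ Finset.univ.filter (fun s : Finset (Fin N) => m ∈ s),
    p s * ∏ ℓ ∈ s.erase m, (1 - B ℓ j)

/-- Miss probability f(B) = Σ_j a_j Σ_{s ≠ ∅} p_s Π_{ℓ ∈ s} (1 - b^(ℓ)_j). -/
noncomputable def missProb {N J : ℕ} (a : Fin J → ℝ) (p : Finset (Fin N) → ℝ)
    (B : Fin N → Fin J → ℝ) : ℝ :=
  ∑ j, a j * ∑ s ∈ Finset.univ.filter (fun s : Finset (Fin N) => s.Nonempty),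
    p s * ∏ ℓ ∈ s, (1 - B ℓ j)

/-- Local miss probability f^(m)(B) = Σ_j a_j (1 - b^(m)_j) q_m(j). -/
noncomputable def localMiss {N J : ℕ} (a : Fin J → ℝ) (p : Finset (Fin N) → ℝ)
    (B : Fin N → Fin J → ℝ) (m : Fin N) : ℝ :=
  ∑ j, a j * (1 - B m j) * qm p B m j

/-- A feasible placement: a 0/1 vector over the J files with exactly K ones. -/
def IsPlacement {J : ℕ} (K : ℕ) (b : Fin J → ℝ) : Prop :=
  (∀ j, b j = 0 ∨ b j = 1) ∧ ∑ j, b j = (K : ℝ)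


lemma missProb_decomp {N J : ℕ} (a : Fin J → ℝ) (p : Finset (Fin N) → ℝ)
    (B : Fin N → Fin J → ℝ) (m : Fin N) :
    missProb a p B = localMiss a p B m +
      ∑ j, a j * ∑ s ∈ Finset.univ.filter (fun s : Finset (Fin N) => s.Nonempty ∧ m ∉ s),
        p s * ∏ ℓ ∈ s, (1 - B ℓ j) := by
  unfold missProb localMiss qm
  rw [← Finset.sum_add_distrib]
  refine Finset.sum_congr rfl fun j _ => ?_
  have hsplit := Finset.sum_filter_add_sum_filter_not
    (Finset.univ.filter (fun s : Finset (Fin N) => s.Nonempty))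
    (fun s => m ∈ s) (fun s => p s * ∏ ℓ ∈ s, (1 - B ℓ j))
  have h1 : (Finset.univ.filter (fun s : Finset (Fin N) => s.Nonempty)).filter (fun s => m ∈ s)
      = Finset.univ.filter (fun s : Finset (Fin N) => m ∈ s) := by
    ext s; simp only [Finset.mem_filter, Finset.mem_univ, true_and]
    exact ⟨fun h => h.2, fun h => ⟨⟨m, h⟩, h⟩⟩
  have h2 : (Finset.univ.filter (fun s : Finset (Fin N) => s.Nonempty)).filter (fun s => ¬ m ∈ s)
      = Finset.univ.filter (fun s : Finset (Fin N) => s.Nonempty ∧ m ∉ s) := by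
    ext s; simp [Finset.mem_filter, and_assoc]
  rw [h1, h2] at hsplit
  have h3 : ∑ s ∈ Finset.univ.filter (fun s : Finset (Fin N) => m ∈ s),
      p s * ∏ ℓ ∈ s, (1 - B ℓ j)
      = (1 - B m j) * ∑ s ∈ Finset.univ.filter (fun s : Finset (Fin N) => m ∈ s),
        p s * ∏ ℓ ∈ s.erase m, (1 - B ℓ j) := by
    rw [Finset.mul_sum]
    refine Finset.sum_congr rfl fun s hs => ?_
    have hm : m ∈ s := (Finset.mem_filter.mp hs).2
    rw [← Finset.mul_prod_erase s _ hm]; ring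
  rw [← hsplit, h3]; ring

lemma missProb_step {N J : ℕ} (a : Fin J → ℝ) (p : Finset (Fin N) → ℝ)
    (B B' : Fin N → Fin J → ℝ) (m : Fin N)
    (h : ∀ ℓ, ℓ ≠ m → B' ℓ = B ℓ)
    (hlt : localMiss a p B' m < localMiss a p B m) :
    missProb a p B' < missProb a p B := by
  rw [missProb_decomp a p B m, missProb_decomp a p B' m]
  have hrest : ∑ j, a j * ∑ s ∈ Finset.univ.filter (fun s : Finset (Fin N) => s.Nonempty ∧ m ∉ s),
        p s * ∏ ℓ ∈ s, (1 - B' ℓ j)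
      = ∑ j, a j * ∑ s ∈ Finset.univ.filter (fun s : Finset (Fin N) => s.Nonempty ∧ m ∉ s),
        p s * ∏ ℓ ∈ s, (1 - B ℓ j) := by
    refine Finset.sum_congr rfl fun j _ => ?_
    congr 1
    refine Finset.sum_congr rfl fun s hs => ?_
    have hm : m ∉ s := (Finset.mem_filter.mp hs).2.2
    congr 1
    refine Finset.prod_congr rfl fun ℓ hℓ => ?_
    rw [h ℓ (fun he => hm (he ▸ hℓ))]
  rw [hrest]
  exact add_lt_add_of_lt_of_le hlt le_rfl

/-- every strictly improving best-response sequence of feasible profiles has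
length at most C(J,K)^N; in particular there is no infinite strictly improving sequence. -/
theorem brd_converges_finite_time (N J K T : ℕ) (hK1 : 1 ≤ K) (hKJ : K ≤ J)
    (a : Fin J → ℝ) (ha : ∀ j, 0 ≤ a j) (hasum : ∑ j, a j = 1)
    (p : Finset (Fin N) → ℝ) (hp : ∀ s, 0 ≤ p s)
    (hpsum : ∑ s ∈ Finset.univ.filter (fun s : Finset (Fin N) => s.Nonempty), p s = 1)
    (B : ℕ → Fin N → Fin J → ℝ)
    (hfeas : ∀ t ≤ T, ∀ m, IsPlacement K (B t m))
    (himp : ∀ t < T, ∃ m : Fin N,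
      (∀ ℓ, ℓ ≠ m → B (t + 1) ℓ = B t ℓ) ∧
      localMiss a p (B (t + 1)) m < localMiss a p (B t) m) :
    T + 1 ≤ (J.choose K) ^ N := by
  classical
  -- the potential strictly decreases along the sequence
  set g : ℕ → ℝ := fun t => missProb a p (B t) with hg
  have hstep : ∀ t < T, g (t + 1) < g t := by
    intro t ht
    obtain ⟨m, hoff, hlt⟩ := himp t ht
    exact missProb_step a p (B t) (B (t+1)) m hoff hlt
  have hchain : ∀ t t', t < t' → t' ≤ T → g t' < g t := by
    intro t t' h h'
    induction t' with
    | zero => omega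
    | succ u ih =>
      rcases Nat.lt_or_ge t u with hu | hu
      · exact lt_trans (hstep u (by omega)) (ih hu (by omega))
      · have : t = u := by omega
        subst this
        exact hstep t (by omega)
  -- encode each profile as a function into K-subsets
  have hcard : ∀ t ≤ T, ∀ m, (Finset.univ.filter (fun j => B t m j = 1)).card = K := by
    intro t ht m
    obtain ⟨h01, hsum⟩ := hfeas t ht m
    have : ∑ j, B t m j = ((Finset.univ.filter (fun j => B t m j = 1)).card : ℝ) := by
      rw [← Finset.sum_boole]
      refine Finset.sum_congr rfl fun j _ => ?_
      rcases h01 j with h0 | h1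
      · simp [h0]
      · simp [h1]
    rw [this] at hsum
    exact_mod_cast hsum
  set F : Fin (T+1) → Fin N → {s : Finset (Fin J) // s.card = K} :=
    fun t m => ⟨Finset.univ.filter (fun j => B t m j = 1),
      hcard t (by omega) m⟩ with hF
  have hBrec : ∀ t : Fin (T+1), ∀ m j,
      B t m j = if j ∈ (F t m).1 then (1:ℝ) else 0 := by
    intro t m j
    obtain ⟨h01, _⟩ := hfeas t (by omega) m
    rcases h01 j with h0 | h1
    · simp [hF, h0]
    · simp [hF, h1]
  have hFinj : Function.Injective F := by
    intro t t' hEq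
    by_contra hne
    have hBeq : B t = B t' := by
      funext m j
      rw [hBrec t m j, hBrec t' m j, hEq]
    have hgeq : g t = g t' := by rw [hg]; simp [hBeq]
    rcases lt_or_gt_of_ne (fun h : (t:ℕ) = (t':ℕ) => hne (Fin.ext h)) with h | h
    · exact absurd hgeq (ne_of_gt (hchain t t' h (by omega)))
    · exact absurd hgeq.symm (ne_of_gt (hchain t' t h (by omega)))
  calc T + 1 = Fintype.card (Fin (T+1)) := (Fintype.card_fin _).symm
    _ ≤ Fintype.card (Fin N → {s : Finset (Fin J) // s.card = K}) :=
        Fintype.card_le_of_injective F hFinj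
    _ = (J.choose K) ^ N := by
        rw [Fintype.card_fun, Fintype.card_finset_len, Fintype.card_fin, Fintype.card_fin]
end

section
/- Structure of Nash equilibria: let B̄ be a Nash equilibrium of the content placement game. Then for every cache m the placement b̄^(m) is a threshold placement with respect to the values a_j q̄_m(j), where q̄_m(j) = Σ_{s: m∈s} p_s Π_{ℓ∈s∖{m}}(1 − b̄^(ℓ)_j); equivalently, for every pair of files i, j with b̄^(m)_i = 1 and b̄^(m)_j = 0 one has a_i q̄_m(i) ≥ a_j q̄_m(j). -/
open Finset

lemma qm_update {N J : ℕ} (p : Finset (Fin N) → ℝ) (B : Fin N → Fin J → ℝ)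
    (m : Fin N) (b : Fin J → ℝ) (j : Fin J) :
    qm p (Function.update B m b) m j = qm p B m j := by
  unfold qm
  refine Finset.sum_congr rfl fun s _ => ?_
  congr 1
  refine Finset.prod_congr rfl fun ℓ hℓ => ?_
  rw [Function.update_of_ne (Finset.ne_of_mem_erase hℓ)]

/-- at a Nash equilibrium every cache stores a threshold placement: any stored
file i and unstored file j satisfy a_i q_m(i) ≥ a_j q_m(j). -/
theorem nash_equilibrium_threshold_structure (N J K : ℕ) (hK1 : 1 ≤ K) (hKJ : K ≤ J)
    (a : Fin J → ℝ) (ha : ∀ j, 0 ≤ a j) (hasum : ∑ j, a j = 1)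
    (p : Finset (Fin N) → ℝ) (hp : ∀ s, 0 ≤ p s)
    (hpsum : ∑ s ∈ Finset.univ.filter (fun s : Finset (Fin N) => s.Nonempty), p s = 1)
    (Bbar : Fin N → Fin J → ℝ) (hfeas : ∀ m, IsPlacement K (Bbar m))
    (hNE : ∀ m : Fin N, ∀ btilde : Fin J → ℝ, IsPlacement K btilde →
      localMiss a p Bbar m ≤ localMiss a p (Function.update Bbar m btilde) m) :
    ∀ m : Fin N, ∀ i j : Fin J, Bbar m i = 1 → Bbar m j = 0 →
      a j * qm p Bbar m j ≤ a i * qm p Bbar m i := by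
  intro m i j hi hj
  have hij : i ≠ j := by intro h; rw [h, hj] at hi; norm_num at hi
  set b := Function.update (Function.update (Bbar m) i 0) j 1 with hb
  have hbi : b i = 0 := by
    rw [hb, Function.update_of_ne hij, Function.update_self]
  have hbj : b j = 1 := by rw [hb, Function.update_self]
  have hbk : ∀ k, k ≠ i → k ≠ j → b k = Bbar m k := fun k hki hkj => by
    rw [hb, Function.update_of_ne hkj, Function.update_of_ne hki]
  obtain ⟨h01, hsum⟩ := hfeas m
  have hfeasb : IsPlacement K b := by
    constructor
    · intro k
      by_cases hkj : k = j
      · subst hkj; right; exact hbj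
      by_cases hki : k = i
      · subst hki; left; exact hbi
      · rw [hbk k hki hkj]; exact h01 k
    · have : ∀ k : Fin J, b k = Bbar m k + (if k = i then -1 else 0) + (if k = j then 1 else 0) := by
        intro k
        by_cases hkj : k = j
        · subst hkj; rw [hbj, hj]; simp [hij.symm]
        by_cases hki : k = i
        · subst hki; rw [hbi, hi]; simp [hkj]
        · rw [hbk k hki hkj]; simp [hki, hkj]
      rw [Finset.sum_congr rfl fun k _ => this k]
      rw [Finset.sum_add_distrib, Finset.sum_add_distrib, hsum]
      simp
  have hNEb := hNE m b hfeasb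
  have hloc : localMiss a p (Function.update Bbar m b) m
      = localMiss a p Bbar m + a i * qm p Bbar m i - a j * qm p Bbar m j := by
    unfold localMiss
    have hupd : ∀ k, Function.update Bbar m b m k = b k := fun k => by
      rw [Function.update_self]
    have key : ∀ k : Fin J,
        a k * (1 - Function.update Bbar m b m k) * qm p (Function.update Bbar m b) m k
        = a k * (1 - Bbar m k) * qm p Bbar m k
          + (if k = i then a i * qm p Bbar m i else 0)
          - (if k = j then a j * qm p Bbar m j else 0) := by
      intro k
      rw [hupd, qm_update]
      by_cases hkj : k = j
      · subst hkj; rw [hbj, hj]; simp [hij.symm]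
      by_cases hki : k = i
      · subst hki; rw [hbi, hi]; simp [hkj]
      · rw [hbk k hki hkj]; simp [hki, hkj]
    rw [Finset.sum_congr rfl fun k _ => key k]
    rw [Finset.sum_sub_distrib, Finset.sum_add_distrib]
    rw [Finset.sum_ite_eq' Finset.univ i, Finset.sum_ite_eq' Finset.univ j]
    simp
  rw [hloc] at hNEb
  linarith
end
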